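/- Let c > 1 and let (μ_k)_{k ∈ ℕ} be complex numbers with Re(μ_k) > 0 for all k and |μ_{k+1}| ≥ c |μ_k| > 0 for all k. Then for every k, ∏_{j ≠ k} | (μ_k - μ_j) / (μ_k + conj(μ_j)) | ≥ ( ∏_{d=1}^∞ (1 - 2/(c^d + 1)) )² > 0. -/

import Mathlib

open Real

private lemma had_grow {c : ℝ} (hc : 0 < c) {μ : ℕ → ℂ}
    (hgrow : ∀ k, c * ‖μ k‖ ≤ ‖μ (k + 1)‖) (n : ℕ) :
    ∀ d : ℕ, c ^ d * ‖μ n‖ ≤ ‖μ (n + d)‖ := by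
  intro d
  induction d with
  | zero => simp
  | succ d ih =>
      have h1 : c ^ (d + 1) * ‖μ n‖ = c * (c ^ d * ‖μ n‖) := by ring
      rw [h1]
      calc c * (c ^ d * ‖μ n‖) ≤ c * ‖μ (n + d)‖ :=
            mul_le_mul_of_nonneg_left ih hc.le
        _ ≤ ‖μ (n + d + 1)‖ := hgrow _

private lemma had_gpos {c : ℝ} (hc : 1 < c) {d : ℕ} (hd : 1 ≤ d) :
    0 < 1 - 2 / (c ^ d + 1) ∧ 1 - 2 / (c ^ d + 1) ≤ 1 := by
  have hcd : 1 < c ^ d := one_lt_pow₀ hc (by omega)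
  constructor
  · have h1 : 2 / (c ^ d + 1) < 1 := by
      rw [div_lt_one (by linarith)]; linarith
    linarith
  · have h2 : 0 < 2 / (c ^ d + 1) := by positivity
    linarith

private lemma had_logbound {c : ℝ} (hc : 1 < c) {d : ℕ} (hd : 1 ≤ d) :
    -Real.log (1 - 2 / (c ^ d + 1)) ≤ (2 * c / (c - 1)) * (1 / c) ^ d := by
  have hc0 : (0 : ℝ) < c := by linarith
  have hy : 1 < c ^ d := one_lt_pow₀ hc (by omega)
  have hcy : c ≤ c ^ d := le_self_pow₀ hc.le (by omega)
  have hg : 1 - 2 / (c ^ d + 1) = (c ^ d - 1) / (c ^ d + 1) := by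
    field_simp
    ring
  have h1 : -Real.log (1 - 2 / (c ^ d + 1)) = Real.log ((c ^ d + 1) / (c ^ d - 1)) := by
    rw [hg, ← Real.log_inv, inv_div]
  have h2 : Real.log ((c ^ d + 1) / (c ^ d - 1)) ≤ (c ^ d + 1) / (c ^ d - 1) - 1 :=
    Real.log_le_sub_one_of_pos (div_pos (by linarith) (by linarith))
  have h3 : (c ^ d + 1) / (c ^ d - 1) - 1 = 2 / (c ^ d - 1) := by
    rw [div_sub_one (by linarith : c ^ d - 1 ≠ 0)]
    congr 1
    ring
  have h4 : 2 / (c ^ d - 1) ≤ (2 * c / (c - 1)) * (1 / c) ^ d := by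
    have hp : (0 : ℝ) < c ^ d := pow_pos hc0 d
    rw [div_pow, one_pow, div_mul_div_comm, div_le_div_iff₀ (by linarith) (mul_pos (by linarith : (0:ℝ) < c - 1) (pow_pos hc0 d))]
    nlinarith
  rw [h1]
  linarith

private lemma had_factor {c : ℝ} (hc : 1 < c) {a b : ℂ}
    (ha : 0 < a.re) (hb : 0 < b.re) (ha0 : 0 < ‖a‖) (hb0 : 0 < ‖b‖)
    {d : ℕ} (hd : 1 ≤ d)
    (hM : c ^ d * min ‖a‖ ‖b‖ ≤ max ‖a‖ ‖b‖) :
    (1 - 2 / (c ^ d + 1) ≤ ‖(a - b) / (a + starRingEnd ℂ b)‖)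
      ∧ ‖(a - b) / (a + starRingEnd ℂ b)‖ ≤ 1
      ∧ 0 < ‖(a - b) / (a + starRingEnd ℂ b)‖ := by
  have hcd : 1 < c ^ d := one_lt_pow₀ hc (by omega)
  have hm : 0 < min ‖a‖ ‖b‖ := lt_min ha0 hb0
  have hmM : min ‖a‖ ‖b‖ < max ‖a‖ ‖b‖ := by nlinarith
  have hden : 0 < ‖a + starRingEnd ℂ b‖ := by
    have hre : (a + starRingEnd ℂ b).re = a.re + b.re := by
      simp [Complex.add_re, Complex.conj_re]
    have hne : a + starRingEnd ℂ b ≠ 0 := by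
      intro h
      rw [h] at hre
      simp at hre
      linarith
    simpa [norm_pos_iff] using hne
  have habne : a ≠ b := by
    intro h
    rw [h] at hmM
    simp at hmM
  have hnum : 0 < ‖a - b‖ := by
    rw [norm_pos_iff, sub_ne_zero]; exact habne
  have hsq : ‖a - b‖ ^ 2 + 4 * a.re * b.re = ‖a + starRingEnd ℂ b‖ ^ 2 := by
    simp only [Complex.sq_norm, Complex.normSq_apply,
      Complex.sub_re, Complex.sub_im, Complex.add_re, Complex.add_im,
      Complex.conj_re, Complex.conj_im]
    ring
  have hup : ‖a - b‖ ≤ ‖a + starRingEnd ℂ b‖ := by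
    nlinarith [norm_nonneg (a - b), norm_nonneg (a + starRingEnd ℂ b), mul_pos ha hb]
  have hlow2 : max ‖a‖ ‖b‖ - min ‖a‖ ‖b‖ ≤ ‖a - b‖ := by
    rw [max_sub_min_eq_abs, abs_sub_comm]
    exact abs_norm_sub_norm_le a b
  have hlow3 : ‖a + starRingEnd ℂ b‖ ≤ max ‖a‖ ‖b‖ + min ‖a‖ ‖b‖ := by
    calc ‖a + starRingEnd ℂ b‖ ≤ ‖a‖ + ‖starRingEnd ℂ b‖ := norm_add_le _ _
      _ = ‖a‖ + ‖b‖ := by rw [RCLike.norm_conj]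
      _ = max ‖a‖ ‖b‖ + min ‖a‖ ‖b‖ := (max_add_min _ _).symm
  rw [norm_div]
  refine ⟨?_, ?_, ?_⟩
  · have key : (1 : ℝ) - 2 / (c ^ d + 1) = (c ^ d - 1) / (c ^ d + 1) := by field_simp; ring
    have step1 : (c ^ d - 1) / (c ^ d + 1)
        ≤ (max ‖a‖ ‖b‖ - min ‖a‖ ‖b‖) / (max ‖a‖ ‖b‖ + min ‖a‖ ‖b‖) := by
      rw [div_le_div_iff₀ (by linarith) (by linarith)]
      nlinarith
    have step2 : (max ‖a‖ ‖b‖ - min ‖a‖ ‖b‖) / (max ‖a‖ ‖b‖ + min ‖a‖ ‖b‖)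
        ≤ ‖a - b‖ / ‖a + starRingEnd ℂ b‖ :=
      div_le_div₀ (norm_nonneg _) hlow2 hden hlow3
    rw [key]
    linarith
  · rw [div_le_one hden]; exact hup
  · exact div_pos hnum hden

theorem hadamard_interpolating_separation (c : ℝ) (hc : 1 < c) (μ : ℕ → ℂ)
    (hre : ∀ k, 0 < (μ k).re) (hpos : ∀ k, 0 < ‖μ k‖)
    (hgrow : ∀ k, c * ‖μ k‖ ≤ ‖μ (k + 1)‖) (k : ℕ) :
    Multipliable (fun j : {j : ℕ // j ≠ k} =>
        ‖(μ k - μ j.1) / (μ k + starRingEnd ℂ (μ j.1))‖) ∧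
      (∏' d : ℕ, (1 - 2 / (c ^ (d + 1) + 1))) ^ 2 ≤
        ∏' j : {j : ℕ // j ≠ k}, ‖(μ k - μ j.1) / (μ k + starRingEnd ℂ (μ j.1))‖ ∧
      0 < (∏' d : ℕ, (1 - 2 / (c ^ (d + 1) + 1))) ^ 2 := by
  have hc0 : (0 : ℝ) < c := by linarith
  set f : {j : ℕ // j ≠ k} → ℝ :=
    fun j => ‖(μ k - μ j.1) / (μ k + starRingEnd ℂ (μ j.1))‖ with hfdef
  have hdist : ∀ j : {j : ℕ // j ≠ k}, 1 ≤ Nat.dist j.1 k := by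
    intro j
    have := j.2
    simp [Nat.dist]
    omega
  have hMd : ∀ j : {j : ℕ // j ≠ k},
      c ^ (Nat.dist j.1 k) * min ‖μ k‖ ‖μ j.1‖ ≤ max ‖μ k‖ ‖μ j.1‖ := by
    intro j
    rcases lt_or_gt_of_ne j.2 with h | h
    · have hd : Nat.dist j.1 k = k - j.1 := by simp [Nat.dist]; omega
      have hgr := had_grow hc0 hgrow j.1 (k - j.1)
      rw [Nat.add_sub_cancel' h.le] at hgr
      calc c ^ (Nat.dist j.1 k) * min ‖μ k‖ ‖μ j.1‖
          ≤ c ^ (k - j.1) * ‖μ j.1‖ := by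
            rw [hd]
            exact mul_le_mul_of_nonneg_left (min_le_right _ _) (pow_nonneg hc0.le _)
        _ ≤ ‖μ k‖ := hgr
        _ ≤ max ‖μ k‖ ‖μ j.1‖ := le_max_left _ _
    · have hd : Nat.dist j.1 k = j.1 - k := by simp [Nat.dist]; omega
      have hgr := had_grow hc0 hgrow k (j.1 - k)
      rw [Nat.add_sub_cancel' h.le] at hgr
      calc c ^ (Nat.dist j.1 k) * min ‖μ k‖ ‖μ j.1‖
          ≤ c ^ (j.1 - k) * ‖μ k‖ := by
            rw [hd]
            exact mul_le_mul_of_nonneg_left (min_le_left _ _) (pow_nonneg hc0.le _)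
        _ ≤ ‖μ j.1‖ := hgr
        _ ≤ max ‖μ k‖ ‖μ j.1‖ := le_max_right _ _
  have hfb : ∀ j : {j : ℕ // j ≠ k},
      1 - 2 / (c ^ (Nat.dist j.1 k) + 1) ≤ f j ∧ f j ≤ 1 ∧ 0 < f j :=
    fun j => had_factor hc (hre k) (hre j.1) (hpos k) (hpos j.1) (hdist j) (hMd j)
  set K : ℝ := 2 * c / (c - 1) with hKdef
  have hK : 0 ≤ K := div_nonneg (by linarith) (by linarith)
  have hr0 : (0 : ℝ) ≤ 1 / c := by positivity
  have hr1 : (1 : ℝ) / c < 1 := by rw [div_lt_one hc0]; exact hc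
  have hgeo : Summable (fun n : ℕ => K * c ^ k * (1 / c) ^ n) :=
    (summable_geometric_of_lt_one hr0 hr1).mul_left _
  have hsum1 : Summable (fun j : {j : ℕ // j ≠ k} => K * c ^ k * (1 / c) ^ j.1) :=
    hgeo.subtype _
  have hbound : ∀ j : {j : ℕ // j ≠ k},
      -Real.log (1 - 2 / (c ^ (Nat.dist j.1 k) + 1)) ≤ K * c ^ k * (1 / c) ^ j.1 := by
    intro j
    have h1 : (1 / c) ^ (Nat.dist j.1 k) ≤ c ^ k * (1 / c) ^ j.1 := by
      have hj : j.1 ≤ k + Nat.dist j.1 k := by simp [Nat.dist]; omega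
      have h2 : c ^ j.1 ≤ c ^ k * c ^ (Nat.dist j.1 k) := by
        rw [← pow_add]
        exact pow_le_pow_right₀ hc.le hj
      rw [div_pow, div_pow, one_pow, one_pow, mul_one_div,
        div_le_div_iff₀ (pow_pos hc0 _) (pow_pos hc0 _), one_mul]
      exact h2
    calc -Real.log (1 - 2 / (c ^ (Nat.dist j.1 k) + 1))
        ≤ K * (1 / c) ^ (Nat.dist j.1 k) := had_logbound hc (hdist j)
      _ ≤ K * c ^ k * (1 / c) ^ j.1 := by
          rw [mul_assoc]
          exact mul_le_mul_of_nonneg_left h1 hK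
  have hgd : ∀ j : {j : ℕ // j ≠ k},
      0 < 1 - 2 / (c ^ (Nat.dist j.1 k) + 1) ∧ 1 - 2 / (c ^ (Nat.dist j.1 k) + 1) ≤ 1 :=
    fun j => had_gpos hc (hdist j)
  -- summability of the log of the distance lower bound
  have hsumGd' : Summable
      (fun j : {j : ℕ // j ≠ k} => -Real.log (1 - 2 / (c ^ (Nat.dist j.1 k) + 1))) := by
    refine Summable.of_nonneg_of_le (fun j => ?_) (fun j => hbound j) hsum1
    exact neg_nonneg.2 (Real.log_nonpos (hgd j).1.le (hgd j).2)
  have hsumGd : Summable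
      (fun j : {j : ℕ // j ≠ k} => Real.log (1 - 2 / (c ^ (Nat.dist j.1 k) + 1))) := by
    simpa using hsumGd'.neg
  -- summability of log f
  have hLsum' : Summable (fun j : {j : ℕ // j ≠ k} => -Real.log (f j)) := by
    refine Summable.of_nonneg_of_le (fun j => ?_) (fun j => ?_) hsum1
    · exact neg_nonneg.2 (Real.log_nonpos (hfb j).2.2.le (hfb j).2.1)
    · calc -Real.log (f j) ≤ -Real.log (1 - 2 / (c ^ (Nat.dist j.1 k) + 1)) :=
            neg_le_neg (Real.log_le_log (hgd j).1 (hfb j).1)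
        _ ≤ K * c ^ k * (1 / c) ^ j.1 := hbound j
  have hLsum : Summable (fun j : {j : ℕ // j ≠ k} => Real.log (f j)) := by
    simpa using hLsum'.neg
  -- summability for the tail product
  have hgd1 : ∀ d : ℕ, 0 < 1 - 2 / (c ^ (d + 1) + 1) ∧ 1 - 2 / (c ^ (d + 1) + 1) ≤ 1 :=
    fun d => had_gpos hc (by omega)
  have hGsum' : Summable (fun d : ℕ => -Real.log (1 - 2 / (c ^ (d + 1) + 1))) := by
    have hgeo2 : Summable (fun d : ℕ => (K * (1 / c)) * (1 / c) ^ d) :=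
      (summable_geometric_of_lt_one hr0 hr1).mul_left _
    have hgeo3 : Summable (fun d : ℕ => K * (1 / c) ^ (d + 1)) := by
      refine hgeo2.congr fun d => ?_
      rw [pow_succ]
      ring
    refine Summable.of_nonneg_of_le (fun d => ?_) (fun d => ?_) hgeo3
    · exact neg_nonneg.2 (Real.log_nonpos (hgd1 d).1.le (hgd1 d).2)
    · exact had_logbound hc (by omega)
  have hGsum : Summable (fun d : ℕ => Real.log (1 - 2 / (c ^ (d + 1) + 1))) := by
    simpa using hGsum'.neg
  -- products as exponentials
  have hfpos : ∀ j, 0 < f j := fun j => (hfb j).2.2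
  have hMul : Multipliable f :=
    Real.multipliable_of_summable_log hfpos hLsum
  have hprod : ∏' j, f j = Real.exp (∑' j, Real.log (f j)) := by
    have h := Real.rexp_tsum_eq_tprod hfpos hLsum
    simpa using h.symm
  have hP : (∏' d : ℕ, (1 - 2 / (c ^ (d + 1) + 1)))
      = Real.exp (∑' d : ℕ, Real.log (1 - 2 / (c ^ (d + 1) + 1))) := by
    have h := Real.rexp_tsum_eq_tprod
      (f := fun (d : ℕ) => 1 - 2 / (c ^ (d + 1) + 1))
      (fun d => (hgd1 d).1) hGsum
    simpa using h.symm
  -- Step A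
  have hA : (∑' j : {j : ℕ // j ≠ k}, Real.log (1 - 2 / (c ^ (Nat.dist j.1 k) + 1)))
      ≤ ∑' j : {j : ℕ // j ≠ k}, Real.log (f j) :=
    Summable.tsum_le_tsum (fun j => Real.log_le_log (hgd j).1 (hfb j).1) hsumGd hLsum
  -- Step B via injection into Bool × ℕ
  set G : Bool × ℕ → ℝ := fun p => -Real.log (1 - 2 / (c ^ (p.2 + 1) + 1)) with hGdef
  have hGnonneg : ∀ p, 0 ≤ G p := fun p =>
    neg_nonneg.2 (Real.log_nonpos (hgd1 p.2).1.le (hgd1 p.2).2)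
  have hGsum2 : Summable G := by
    refine (summable_prod_of_nonneg (fun p => hGnonneg p)).mpr ⟨fun b => hGsum', ?_⟩
    exact (hasSum_fintype _).summable
  set φ : {j : ℕ // j ≠ k} → Bool × ℕ :=
    fun j => (decide (j.1 < k), Nat.dist j.1 k - 1) with hφdef
  have hφ : Function.Injective φ := by
    intro x y h
    rw [hφdef] at h
    simp only [Prod.mk.injEq, decide_eq_decide] at h
    have hx := hdist x
    have hy := hdist y
    have hx2 := x.2
    have hy2 := y.2
    apply Subtype.ext
    simp [Nat.dist] at h hx hy ⊢
    omega
  have hBle : (∑' j : {j : ℕ // j ≠ k}, -Real.log (1 - 2 / (c ^ (Nat.dist j.1 k) + 1)))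
      ≤ ∑' p : Bool × ℕ, G p := by
    refine Summable.tsum_le_tsum_of_inj φ hφ (fun p _ => hGnonneg p) (fun j => ?_) hsumGd' hGsum2
    have hd1 : Nat.dist j.1 k - 1 + 1 = Nat.dist j.1 k := by
      have := hdist j; omega
    simp only [hGdef, hφdef, hd1]
    exact le_rfl
  have hGval : (∑' p : Bool × ℕ, G p)
      = 2 * ∑' d : ℕ, -Real.log (1 - 2 / (c ^ (d + 1) + 1)) := by
    rw [Summable.tsum_prod hGsum2, tsum_bool]
    simp only [hGdef]
    ring
  have hkey : 2 * (∑' d : ℕ, Real.log (1 - 2 / (c ^ (d + 1) + 1)))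
      ≤ ∑' j : {j : ℕ // j ≠ k}, Real.log (f j) := by
    have h1 : (∑' j : {j : ℕ // j ≠ k}, -Real.log (1 - 2 / (c ^ (Nat.dist j.1 k) + 1)))
        = -(∑' j : {j : ℕ // j ≠ k}, Real.log (1 - 2 / (c ^ (Nat.dist j.1 k) + 1))) := by
      rw [tsum_neg]
    have h2 : (∑' d : ℕ, -Real.log (1 - 2 / (c ^ (d + 1) + 1)))
        = -(∑' d : ℕ, Real.log (1 - 2 / (c ^ (d + 1) + 1))) := by
      rw [tsum_neg]
    rw [h1] at hBle
    rw [hGval, h2] at hBle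
    linarith
  refine ⟨hMul, ?_, ?_⟩
  · rw [hprod, hP]
    calc Real.exp (∑' d : ℕ, Real.log (1 - 2 / (c ^ (d + 1) + 1))) ^ 2
        = Real.exp (2 * ∑' d : ℕ, Real.log (1 - 2 / (c ^ (d + 1) + 1))) := by
          rw [two_mul, Real.exp_add, sq]
      _ ≤ Real.exp (∑' j : {j : ℕ // j ≠ k}, Real.log (f j)) := Real.exp_le_exp.2 hkey
  · rw [hP]
    positivity
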